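/- Let f : ℝ → ℝ be continuous with f(τ) > 0 for all τ, and suppose that (log f(τ))/τ tends to a finite limit k_c as τ → −∞. If μ is a real number with μ < −k_c, then for every t ∈ ℝ the function τ ↦ f(τ)·exp(μ·(τ − t)) is NOT integrable on the half-line (−∞, t]. -/

import Mathlib

open MeasureTheory Filter Set

/-- Divergence half of Theorem 1: if the critical exponent of the positive continuous
kernel magnitude `f` is `k_c = lim_{τ→−∞} (log f τ)/τ` and `μ < −k_c`, then for every `t`
the weighted kernel `τ ↦ f τ · exp (μ (τ − t))` is not integrable on `(−∞, t]`. -/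
theorem stmt_0 (f : ℝ → ℝ) (hf : Continuous f) (hfpos : ∀ τ, 0 < f τ) (k_c : ℝ)
    (hlim : Tendsto (fun τ => Real.log (f τ) / τ) atBot (nhds k_c))
    (μ : ℝ) (hμ : μ < -k_c) :
    ∀ t : ℝ, ¬ IntegrableOn (fun τ => f τ * Real.exp (μ * (τ - t))) (Iic t) := by
  intro t hint
  set ε : ℝ := -(μ + k_c) / 2 with hε
  have hεpos : 0 < ε := by
    have : μ + k_c < 0 := by linarith
    linarith
  have hc : k_c + ε + μ < 0 := by
    rw [hε]; linarith
  -- eventually log f τ / τ is within ε of k_c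
  have hev : ∀ᶠ τ in atBot, |Real.log (f τ) / τ - k_c| < ε := by
    have := Metric.tendsto_nhds.mp hlim ε hεpos
    simpa [Real.dist_eq] using this
  obtain ⟨T, hT⟩ := eventually_atBot.mp hev
  set T' : ℝ := min T (min t (-1)) with hT'
  have hT't : T' ≤ t := le_trans (min_le_right _ _) (min_le_left _ _)
  have hT'neg : T' ≤ -1 := le_trans (min_le_right _ _) (min_le_right _ _)
  set C : ℝ := Real.exp (-(μ * t)) with hC
  have hCpos : 0 < C := Real.exp_pos _
  -- lower bound on Iic T'
  have hbound : ∀ τ ∈ Iic T', C ≤ f τ * Real.exp (μ * (τ - t)) := by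
    intro τ hτ
    have hτT : τ ≤ T := le_trans hτ (min_le_left _ _)
    have hτneg : τ ≤ -1 := le_trans hτ hT'neg
    have hτlt : τ < 0 := lt_of_le_of_lt hτneg (by norm_num)
    have h1 : Real.log (f τ) / τ - k_c < ε := lt_of_abs_lt (hT τ hτT) |>.trans_le le_rfl
      |>.trans_le le_rfl
    have h1' : Real.log (f τ) / τ < k_c + ε := by linarith
    have h2 : (k_c + ε) * τ ≤ Real.log (f τ) := by
      have := (div_lt_iff_of_neg hτlt).mp h1'
      linarith
    have h3 : Real.exp ((k_c + ε) * τ) ≤ f τ := by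
      calc Real.exp ((k_c + ε) * τ) ≤ Real.exp (Real.log (f τ)) := Real.exp_le_exp.mpr h2
        _ = f τ := Real.exp_log (hfpos τ)
    have h4 : Real.exp ((k_c + ε) * τ) * Real.exp (μ * (τ - t))
        ≤ f τ * Real.exp (μ * (τ - t)) :=
      mul_le_mul_of_nonneg_right h3 (Real.exp_pos _).le
    have h5 : Real.exp ((k_c + ε) * τ) * Real.exp (μ * (τ - t))
        = Real.exp ((k_c + ε + μ) * τ - μ * t) := by
      rw [← Real.exp_add]; ring_nf
    have h6 : 0 ≤ (k_c + ε + μ) * τ := by nlinarith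
    have h7 : C ≤ Real.exp ((k_c + ε + μ) * τ - μ * t) := by
      apply Real.exp_le_exp.mpr; linarith
    calc C ≤ Real.exp ((k_c + ε) * τ) * Real.exp (μ * (τ - t)) := by rw [h5]; exact h7
      _ ≤ _ := h4
  -- integrability on the smaller set
  have hint' : IntegrableOn (fun τ => f τ * Real.exp (μ * (τ - t))) (Iic T') :=
    hint.mono_set (Iic_subset_Iic.mpr hT't)
  -- hence the constant C is integrable on Iic T'
  have hconst : IntegrableOn (fun _ : ℝ => C) (Iic T') := by
    apply Integrable.mono' hint' aestronglyMeasurable_const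
    rw [ae_restrict_iff' measurableSet_Iic]
    exact Filter.Eventually.of_forall fun τ hτ => by
      rw [Real.norm_eq_abs, abs_of_pos hCpos]; exact hbound τ hτ
  -- contradiction: Iic T' has infinite measure
  rw [IntegrableOn, integrable_const_iff] at hconst
  rcases hconst with h | h
  · exact hCpos.ne' h
  · replace h := h.measure_univ_lt_top
    rw [Measure.restrict_apply_univ, Real.volume_Iic] at h
    exact (lt_irrefl _ h).elim
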